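/- Let D be a division ring and σ an automorphism of D. Inside the quotient division ring D(y;σ) of the skew polynomial ring D[y;σ], for any infinite set N ⊆ ℕ of positive integers, the intersection of the sub-division-rings D(yⁿ) (generated by D and yⁿ) over n ∈ N equals D. -/

import Mathlib

/-- An axiomatization of the skew polynomial ring `R[y; σ]`: the ring `A` is freely
spanned (additively) by the monomials `ι a * y ^ i`, and `y * ι a = ι (σ a) * y`. -/
structure SkewPolyStructure (R A : Type*) [Ring R] [Ring A]
    (σ : R →+* R) (ι : R →+* A) (y : A) where
  coeff : A ≃+ (ℕ →₀ R)
  coeff_symm : ∀ c : ℕ →₀ R, coeff.symm c = c.sum fun i a => ι a * y ^ i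
  twist : ∀ a : R, y * ι a = ι (σ a) * y


section SkewAux

variable {D A : Type*} [DivisionRing D] [Ring A]
  {σ : D →+* D} {ι : D →+* A} {y : A}
variable (s : SkewPolyStructure D A σ ι y)

include s in
lemma skew_coeff_monomial (a : D) (m : ℕ) :
    s.coeff (ι a * y ^ m) = Finsupp.single m a := by
  have h := s.coeff_symm (Finsupp.single m a)
  rw [Finsupp.sum_single_index (by simp)] at h
  rw [← h, AddEquiv.apply_symm_apply]

include s in
lemma skew_pow_mul_base (m : ℕ) (d : D) :
    y ^ m * ι d = ι ((⇑σ)^[m] d) * y ^ m := by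
  induction m generalizing d with
  | zero => simp
  | succ m ih =>
    rw [pow_succ, mul_assoc, s.twist, ← mul_assoc, ih, mul_assoc, ← pow_succ,
      ← Function.iterate_succ_apply]

include s in
lemma skew_mono_mul (a b : D) (i k : ℕ) :
    (ι a * y ^ i) * (ι b * y ^ k) = ι (a * (⇑σ)^[i] b) * y ^ (i + k) := by
  rw [mul_assoc, ← mul_assoc (y ^ i), skew_pow_mul_base s, mul_assoc (ι ((⇑σ)^[i] b)),
    ← pow_add, ← mul_assoc, ← map_mul]

include s in
lemma skew_coeff_mul (f g : A) :
    s.coeff (f * g) = (s.coeff f).sum fun i a => (s.coeff g).sum fun k b =>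
      Finsupp.single (i + k) (a * (⇑σ)^[i] b) := by
  have hf : f = (s.coeff f).sum fun i a => ι a * y ^ i := by
    rw [← s.coeff_symm, AddEquiv.symm_apply_apply]
  have hg : g = (s.coeff g).sum fun k b => ι b * y ^ k := by
    rw [← s.coeff_symm, AddEquiv.symm_apply_apply]
  conv_lhs => rw [hf, hg]
  rw [Finsupp.sum_mul]
  simp only [Finsupp.mul_sum, skew_mono_mul s]
  simp only [Finsupp.sum, map_sum, skew_coeff_monomial s]

end SkewAux

section SkewOrd

variable {D A : Type*} [DivisionRing D] [Ring A]
  {σ : D →+* D} {ι : D →+* A} {y : A}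
variable (s : SkewPolyStructure D A σ ι y)

/-- The trailing degree (order) of a skew polynomial. -/
noncomputable def sOrd (f : A) : ℕ := sInf {i | s.coeff f i ≠ 0}

omit [Ring A] in
lemma skew_iter_zero (m : ℕ) : (⇑σ)^[m] (0 : D) = 0 :=
  Function.iterate_fixed (map_zero σ) m

lemma skew_iter_ne_zero (m : ℕ) {d : D} (hd : d ≠ 0) : (⇑σ)^[m] d ≠ 0 := by
  intro h
  exact hd ((σ.injective.iterate m) (h.trans (Function.iterate_fixed (map_zero σ) m).symm))

lemma skew_coeff_ne (f : A) (hf : f ≠ 0) : s.coeff f ≠ 0 := by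
  intro h
  exact hf (s.coeff.injective (by rw [h, map_zero]))

lemma skew_ord_nonempty (f : A) (hf : f ≠ 0) : {i | s.coeff f i ≠ 0}.Nonempty := by
  obtain ⟨i, hi⟩ := Finsupp.ne_iff.mp (skew_coeff_ne s f hf)
  exact ⟨i, by simpa using hi⟩

lemma skew_coeff_sOrd_ne_zero (f : A) (hf : f ≠ 0) : s.coeff f (sOrd s f) ≠ 0 :=
  Nat.sInf_mem (skew_ord_nonempty s f hf)

lemma skew_sOrd_le {f : A} {i : ℕ} (h : s.coeff f i ≠ 0) : sOrd s f ≤ i :=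
  Nat.sInf_le h

lemma skew_coeff_eq_zero_of_lt {f : A} {i : ℕ} (h : i < sOrd s f) : s.coeff f i = 0 := by
  by_contra h'
  exact absurd (skew_sOrd_le s h') (not_le.mpr h)

lemma skew_sOrd_eq {f : A} {k : ℕ} (hk : s.coeff f k ≠ 0)
    (hlow : ∀ i < k, s.coeff f i = 0) : sOrd s f = k := by
  refine le_antisymm (skew_sOrd_le s hk) ?_
  by_contra h
  push_neg at h
  have hf : f ≠ 0 := fun h0 => hk (by rw [h0, map_zero]; rfl)
  exact skew_coeff_sOrd_ne_zero s f hf (hlow _ h)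

lemma skew_coeff_mul_low (f g : A) {k : ℕ} (hk : k < sOrd s f + sOrd s g) :
    s.coeff (f * g) k = 0 := by
  rw [skew_coeff_mul s, Finsupp.sum_apply, Finsupp.sum]
  refine Finset.sum_eq_zero fun i hi => ?_
  rw [Finsupp.sum_apply, Finsupp.sum]
  refine Finset.sum_eq_zero fun l hl => ?_
  have h1 : sOrd s f ≤ i := skew_sOrd_le s (Finsupp.mem_support_iff.mp hi)
  have h2 : sOrd s g ≤ l := skew_sOrd_le s (Finsupp.mem_support_iff.mp hl)
  exact Finsupp.single_eq_of_ne (by omega)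

lemma skew_coeff_mul_ord (f g : A) (hf : f ≠ 0) (hg : g ≠ 0) :
    s.coeff (f * g) (sOrd s f + sOrd s g)
      = s.coeff f (sOrd s f) * (⇑σ)^[sOrd s f] (s.coeff g (sOrd s g)) := by
  rw [skew_coeff_mul s, Finsupp.sum_apply, Finsupp.sum]
  rw [Finset.sum_eq_single (sOrd s f)]
  · rw [Finsupp.sum_apply, Finsupp.sum]
    rw [Finset.sum_eq_single (sOrd s g)]
    · exact Finsupp.single_eq_same
    · intro l hl hne
      have h2 : sOrd s g ≤ l := skew_sOrd_le s (Finsupp.mem_support_iff.mp hl)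
      exact Finsupp.single_eq_of_ne (by omega)
    · intro h
      exact absurd (Finsupp.mem_support_iff.mpr (skew_coeff_sOrd_ne_zero s g hg)) h
  · intro i hi hne
    have h1 : sOrd s f ≤ i := skew_sOrd_le s (Finsupp.mem_support_iff.mp hi)
    rw [Finsupp.sum_apply, Finsupp.sum]
    refine Finset.sum_eq_zero fun l hl => ?_
    have h2 : sOrd s g ≤ l := skew_sOrd_le s (Finsupp.mem_support_iff.mp hl)
    exact Finsupp.single_eq_of_ne (by omega)
  · intro h
    exact absurd (Finsupp.mem_support_iff.mpr (skew_coeff_sOrd_ne_zero s f hf)) h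

include s in
lemma skew_mul_ne_zero {f g : A} (hf : f ≠ 0) (hg : g ≠ 0) : f * g ≠ 0 := by
  intro h
  have h2 := skew_coeff_mul_ord s f g hf hg
  rw [h, map_zero] at h2
  exact mul_ne_zero (skew_coeff_sOrd_ne_zero s f hf)
    (skew_iter_ne_zero (σ := σ) _ (skew_coeff_sOrd_ne_zero s g hg)) (by simpa using h2.symm)

lemma skew_sOrd_mul (f g : A) (hf : f ≠ 0) (hg : g ≠ 0) :
    sOrd s (f * g) = sOrd s f + sOrd s g := by
  refine skew_sOrd_eq s ?_ fun i hi => skew_coeff_mul_low s f g hi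
  rw [skew_coeff_mul_ord s f g hf hg]
  exact mul_ne_zero (skew_coeff_sOrd_ne_zero s f hf)
    (skew_iter_ne_zero (σ := σ) _ (skew_coeff_sOrd_ne_zero s g hg))

lemma skew_coeff_mul_base (f : A) (d : D) (i : ℕ) :
    s.coeff (f * ι d) i = s.coeff f i * (⇑σ)^[i] d := by
  have hιd : s.coeff (ι d) = Finsupp.single 0 d := by
    simpa using skew_coeff_monomial s d 0
  rw [skew_coeff_mul s, hιd]
  have h2 : ((s.coeff f).sum fun i' a => (Finsupp.single 0 d).sum fun l b =>
      Finsupp.single (i' + l) (a * (⇑σ)^[i'] b))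
      = (s.coeff f).sum fun i' a => Finsupp.single i' (a * (⇑σ)^[i'] d) := by
    refine Finsupp.sum_congr fun i' _ => ?_
    rw [Finsupp.sum_single_index (by simp), add_zero]
  rw [h2, Finsupp.sum_apply, Finsupp.sum]
  rw [Finset.sum_eq_single i]
  · exact Finsupp.single_eq_same
  · intro i' _ hne
    exact Finsupp.single_eq_of_ne' hne
  · intro h
    rw [Finsupp.notMem_support_iff.mp h, zero_mul, Finsupp.single_zero, Finsupp.coe_zero,
      Pi.zero_apply]

end SkewOrd


/-- Inside the left quotient division ring `E = D(y;σ)` of `A = D[y;σ]`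
(`σ` an automorphism of the division ring `D`), the intersection of the sub-division
rings `D(yⁿ)` (left fractions of polynomials in `yⁿ`) over an infinite set `N` of
positive integers equals `D`. -/
theorem inter_sub_division_rings_eq_base
    (D A E : Type*) [DivisionRing D] [Ring A] [DivisionRing E]
    (σ : D →+* D) (hσ : Function.Bijective σ)
    (ι : D →+* A) (y : A) (s : SkewPolyStructure D A σ ι y)
    (j : A →+* E) (hj : Function.Injective j)
    -- `E` is the left quotient division ring of `A`: every element is a left fraction
    (hfrac : ∀ e : E, ∃ a b : A, b ≠ 0 ∧ e = (j b)⁻¹ * j a)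
    (N : Set ℕ) (hN : N.Infinite) (hN1 : ∀ n ∈ N, 1 ≤ n) :
    (⋂ n ∈ N, {e : E | ∃ a b : A, b ≠ 0 ∧
        (∀ i : ℕ, (s.coeff a) i ≠ 0 → n ∣ i) ∧
        (∀ i : ℕ, (s.coeff b) i ≠ 0 → n ∣ i) ∧
        e = (j b)⁻¹ * j a}) = Set.range (j.comp ι) := by
  classical
  have hj0 : ∀ x : A, x ≠ 0 → j x ≠ 0 := fun x hx h => hx (hj (by rw [h, map_zero]))
  have hA1 : (1 : A) ≠ 0 := by
    intro h
    have h1 : s.coeff (1 : A) = Finsupp.single 0 (1 : D) := by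
      simpa using skew_coeff_monomial s (1 : D) 0
    rw [h, map_zero] at h1
    exact one_ne_zero (Finsupp.single_eq_zero.mp h1.symm)
  -- left Ore condition
  have ore : ∀ b q : A, b ≠ 0 → q ≠ 0 → ∃ u w : A, u ≠ 0 ∧ w ≠ 0 ∧ u * b = w * q := by
    intro b q hb hq
    obtain ⟨u, w, hw, hE⟩ := hfrac (j q * (j b)⁻¹)
    have hjb := hj0 b hb
    have hjw := hj0 w hw
    have key : j u * j b = j w * j q := by
      have h1 : j u = j w * (j q * (j b)⁻¹) := by
        rw [hE, ← mul_assoc, mul_inv_cancel₀ hjw, one_mul]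
      rw [h1, mul_assoc, mul_assoc, inv_mul_cancel₀ hjb, mul_one]
    have hwq : u * b = w * q := hj (by rw [map_mul, map_mul]; exact key)
    have hu : u ≠ 0 := by
      intro h0
      rw [h0, zero_mul] at hwq
      exact skew_mul_ne_zero s hw hq hwq.symm
    exact ⟨u, w, hu, hw, hwq⟩
  -- common multiple for two representations of the same fraction
  have common : ∀ a b p q : A, b ≠ 0 → q ≠ 0 → (j b)⁻¹ * j a = (j q)⁻¹ * j p →
      ∃ u w : A, u ≠ 0 ∧ w ≠ 0 ∧ u * b = w * q ∧ u * a = w * p := by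
    intro a b p q hb hq heq
    obtain ⟨u, w, hu, hw, hub⟩ := ore b q hb hq
    have hjb := hj0 b hb
    have hjq := hj0 q hq
    refine ⟨u, w, hu, hw, hub, hj ?_⟩
    rw [map_mul, map_mul]
    calc j u * j a = j u * (j b * ((j b)⁻¹ * j a)) := by
            rw [← mul_assoc (j b), mul_inv_cancel₀ hjb, one_mul]
      _ = (j u * j b) * ((j q)⁻¹ * j p) := by rw [heq, mul_assoc]
      _ = (j w * j q) * ((j q)⁻¹ * j p) := by rw [← map_mul, hub, map_mul]
      _ = j w * j p := by rw [mul_assoc, ← mul_assoc (j q), mul_inv_cancel₀ hjq, one_mul]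
  -- an integer divisible by all elements of the infinite set N is zero
  have dvd_all_zero : ∀ z : ℤ, (∀ n ∈ N, (n : ℤ) ∣ z) → z = 0 := by
    intro z hz
    by_contra h0
    have hex : ∃ n ∈ N, z.natAbs < n := by
      by_contra h
      push_neg at h
      exact hN ((Set.finite_Iic z.natAbs).subset fun x hx => Set.mem_Iic.mpr (h x hx))
    obtain ⟨n, hn, hlt⟩ := hex
    have h1 : (n : ℤ) ≤ |z| := Int.le_of_dvd (abs_pos.mpr h0) ((dvd_abs _ _).mpr (hz n hn))
    rw [Int.abs_eq_natAbs] at h1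
    exact absurd h1 (by exact_mod_cast not_le.mpr hlt)
  -- order equality for nonzero elements of the intersection
  have ordeq : ∀ e' : E, e' ≠ 0 →
      (∀ n ∈ N, ∃ p q : A, q ≠ 0 ∧ (∀ i, s.coeff p i ≠ 0 → n ∣ i) ∧
        (∀ i, s.coeff q i ≠ 0 → n ∣ i) ∧ e' = (j q)⁻¹ * j p) →
      ∀ a' b' : A, a' ≠ 0 → b' ≠ 0 → e' = (j b')⁻¹ * j a' → sOrd s a' = sOrd s b' := by
    intro e' he0 hmem a' b' ha hb hrep
    have hz : ∀ n ∈ N, (n : ℤ) ∣ ((sOrd s a' : ℤ) - sOrd s b') := by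
      intro n hn
      obtain ⟨p, q, hq, hp_supp, hq_supp, hpq⟩ := hmem n hn
      have hp : p ≠ 0 := by
        intro h0
        rw [h0, map_zero, mul_zero] at hpq
        exact he0 hpq
      obtain ⟨u, w, hu, hw, hub, hua⟩ := common a' b' p q hb hq (hrep.symm.trans hpq)
      have e1 : sOrd s u + sOrd s a' = sOrd s w + sOrd s p := by
        rw [← skew_sOrd_mul s u a' hu ha, hua, skew_sOrd_mul s w p hw hp]
      have e2 : sOrd s u + sOrd s b' = sOrd s w + sOrd s q := by
        rw [← skew_sOrd_mul s u b' hu hb, hub, skew_sOrd_mul s w q hw hq]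
      obtain ⟨c1, hc1⟩ := hp_supp _ (skew_coeff_sOrd_ne_zero s p hp)
      obtain ⟨c2, hc2⟩ := hq_supp _ (skew_coeff_sOrd_ne_zero s q hq)
      refine ⟨(c1 : ℤ) - c2, ?_⟩
      have h3 : ((sOrd s a' : ℤ)) - sOrd s b' = (sOrd s p : ℤ) - sOrd s q := by omega
      rw [h3, hc1, hc2]
      push_cast
      ring
    have := dvd_all_zero _ hz
    omega
  apply subset_antisymm
  · -- the intersection is contained in the image of D
    intro e he
    have hmem : ∀ n ∈ N, ∃ p q : A, q ≠ 0 ∧ (∀ i, s.coeff p i ≠ 0 → n ∣ i) ∧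
        (∀ i, s.coeff q i ≠ 0 → n ∣ i) ∧ e = (j q)⁻¹ * j p := by
      intro n hn
      obtain ⟨p, q, hq, h1, h2, h3⟩ := Set.mem_iInter₂.mp he n hn
      exact ⟨p, q, hq, h1, h2, h3⟩
    obtain ⟨n₀, hn₀⟩ := hN.nonempty
    obtain ⟨a, b, hb, -, -, hrep⟩ := hmem n₀ hn₀
    by_cases ha : a = 0
    · exact ⟨0, by simp [hrep, ha]⟩
    have he0 : e ≠ 0 := by
      rw [hrep]
      exact mul_ne_zero (inv_ne_zero (hj0 b hb)) (hj0 a ha)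
    have hordab : sOrd s a = sOrd s b := ordeq e he0 hmem a b ha hb hrep
    have hα : s.coeff a (sOrd s b) ≠ 0 := hordab ▸ skew_coeff_sOrd_ne_zero s a ha
    have hβ : s.coeff b (sOrd s b) ≠ 0 := skew_coeff_sOrd_ne_zero s b hb
    set τ := RingEquiv.ofBijective σ hσ with hτ
    set lam := (⇑τ.symm)^[sOrd s b] ((s.coeff b (sOrd s b))⁻¹ * s.coeff a (sOrd s b))
      with hlam
    have hσlam : (⇑σ)^[sOrd s b] lam
        = (s.coeff b (sOrd s b))⁻¹ * s.coeff a (sOrd s b) := by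
      have hli : Function.LeftInverse ⇑σ ⇑τ.symm := fun x => τ.apply_symm_apply x
      exact (hli.iterate (sOrd s b)) _
    have hlam0 : lam ≠ 0 := by
      intro h0
      apply mul_ne_zero (inv_ne_zero hβ) hα
      rw [← hσlam, h0]
      exact Function.iterate_fixed (map_zero σ) (sOrd s b)
    have hrlow : ∀ i ≤ sOrd s b, s.coeff (a - b * ι lam) i = 0 := by
      intro i hi
      rw [map_sub, Finsupp.sub_apply, skew_coeff_mul_base s]
      rcases lt_or_eq_of_le hi with hlt | heq
      · rw [skew_coeff_eq_zero_of_lt s (hordab ▸ hlt : i < sOrd s a),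
          skew_coeff_eq_zero_of_lt s hlt, zero_mul, sub_zero]
      · subst heq
        rw [hσlam, ← mul_assoc, mul_inv_cancel₀ hβ, one_mul, sub_self]
    by_cases hr0 : a - b * ι lam = 0
    · refine ⟨lam, ?_⟩
      have hab : a = b * ι lam := by rwa [sub_eq_zero] at hr0
      rw [RingHom.comp_apply, hrep, hab, map_mul, ← mul_assoc,
        inv_mul_cancel₀ (hj0 b hb), one_mul]
    · exfalso
      have hre : e - j (ι lam) = (j b)⁻¹ * j (a - b * ι lam) := by
        rw [hrep, map_sub, map_mul, mul_sub, ← mul_assoc,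
          inv_mul_cancel₀ (hj0 b hb), one_mul]
      have hre0 : e - j (ι lam) ≠ 0 := by
        rw [hre]
        exact mul_ne_zero (inv_ne_zero (hj0 b hb)) (hj0 _ hr0)
      have hmem' : ∀ n ∈ N, ∃ p q : A, q ≠ 0 ∧ (∀ i, s.coeff p i ≠ 0 → n ∣ i) ∧
          (∀ i, s.coeff q i ≠ 0 → n ∣ i) ∧ e - j (ι lam) = (j q)⁻¹ * j p := by
        intro n hn
        obtain ⟨p, q, hq, h1, h2, h3⟩ := hmem n hn
        refine ⟨p - q * ι lam, q, hq, ?_, h2, ?_⟩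
        · intro i hi
          rw [map_sub, Finsupp.sub_apply, skew_coeff_mul_base s] at hi
          by_cases hpi : s.coeff p i = 0
          · rw [hpi, zero_sub, neg_ne_zero] at hi
            exact h2 i fun h => hi (by rw [h, zero_mul])
          · exact h1 i hpi
        · rw [h3, map_sub, map_mul, mul_sub, ← mul_assoc,
            inv_mul_cancel₀ (hj0 q hq), one_mul]
      have hord_r : sOrd s (a - b * ι lam) = sOrd s b :=
        ordeq _ hre0 hmem' _ b hr0 hb hre
      have hgt : sOrd s b < sOrd s (a - b * ι lam) :=
        lt_of_not_ge fun h => skew_coeff_sOrd_ne_zero s _ hr0 (hrlow _ h)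
      omega
  · -- the image of D is contained in every D(yⁿ)
    rintro e ⟨d, rfl⟩
    refine Set.mem_iInter₂.mpr fun n hn => ⟨ι d, 1, hA1, ?_, ?_, ?_⟩
    · intro i hi
      have hιd : s.coeff (ι d) = Finsupp.single 0 d := by
        simpa using skew_coeff_monomial s d 0
      rw [hιd] at hi
      rcases eq_or_ne i 0 with rfl | h
      · exact dvd_zero n
      · exact absurd (Finsupp.single_eq_of_ne' (Ne.symm h)) hi
    · intro i hi
      have h1 : s.coeff (1 : A) = Finsupp.single 0 (1 : D) := by
        simpa using skew_coeff_monomial s (1 : D) 0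
      rw [h1] at hi
      rcases eq_or_ne i 0 with rfl | h
      · exact dvd_zero n
      · exact absurd (Finsupp.single_eq_of_ne' (Ne.symm h)) hi
    · rw [map_one, inv_one, one_mul, RingHom.comp_apply]
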